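/- Harmonic conjugacy is an involution: Let A and B be distinct points, and let υ be the map on the points of the line AB defined by υ(X) = h(A,B;X). Then υ is a projectivity of the range of AB onto itself, υ∘υ is the identity, and υ is not the identity. -/

import Mathlib

open Configuration

universe u
variable (P L : Type u) [Membership P L]

/-- Three points are collinear if some line passes through all three. -/
def Col (A B C : P) : Prop := ∃ l : L, A ∈ l ∧ B ∈ l ∧ C ∈ l

/-- Every line of `L` is incident with at least `n` distinct points. -/
def LinesHaveAtLeast (n : ℕ) : Prop :=
  ∀ l : L, ∃ s : Finset P, n ≤ s.card ∧ ∀ X ∈ s, X ∈ l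
/-- `IsTriangle A B C ab bc ca` : the points `A B C` form a triangle with sides
`ab = AB`, `bc = BC`, `ca = CA`; noncollinearity is expressed by each vertex
lying outside the opposite side. -/
def IsTriangle (A B C : P) (ab bc ca : L) : Prop :=
  A ∈ ab ∧ B ∈ ab ∧ B ∈ bc ∧ C ∈ bc ∧ C ∈ ca ∧ A ∈ ca ∧ A ∉ bc ∧ B ∉ ca ∧ C ∉ ab

/-- Two triangles are distinct if corresponding vertices are distinct and
corresponding sides are distinct. -/
def DistinctTriangles (A B C A' B' C' : P) (ab bc ca ab' bc' ca' : L) : Prop :=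
  A ≠ A' ∧ B ≠ B' ∧ C ≠ C' ∧ ab ≠ ab' ∧ bc ≠ bc' ∧ ca ≠ ca'

/-- Two triangles are perspective from the center `O` : the lines joining
corresponding vertices are concurrent at `O`, and `O` lies outside each of the
six sides. -/
def PerspectiveFromCenter (A B C A' B' C' : P) (ab bc ca ab' bc' ca' : L) (O : P) : Prop :=
  (∃ la : L, A ∈ la ∧ A' ∈ la ∧ O ∈ la) ∧
  (∃ lb : L, B ∈ lb ∧ B' ∈ lb ∧ O ∈ lb) ∧
  (∃ lc : L, C ∈ lc ∧ C' ∈ lc ∧ O ∈ lc) ∧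
  O ∉ ab ∧ O ∉ bc ∧ O ∉ ca ∧ O ∉ ab' ∧ O ∉ bc' ∧ O ∉ ca'

/-- Two triangles are perspective from the axis `l` : the intersection points of
corresponding sides lie on `l`, and `l` avoids each of the six vertices. -/
def PerspectiveFromAxis (A B C A' B' C' : P) (ab bc ca ab' bc' ca' : L) (l : L) : Prop :=
  (∃ X : P, X ∈ ab ∧ X ∈ ab' ∧ X ∈ l) ∧
  (∃ Y : P, Y ∈ bc ∧ Y ∈ bc' ∧ Y ∈ l) ∧
  (∃ Z : P, Z ∈ ca ∧ Z ∈ ca' ∧ Z ∈ l) ∧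
  A ∉ l ∧ B ∉ l ∧ C ∉ l ∧ A' ∉ l ∧ B' ∉ l ∧ C' ∉ l

/-- Desargues's property: two distinct triangles that are perspective from a
center are perspective from an axis. -/
def DesarguesProperty : Prop :=
  ∀ (A B C A' B' C' : P) (ab bc ca ab' bc' ca' : L) (O : P),
    IsTriangle P L A B C ab bc ca → IsTriangle P L A' B' C' ab' bc' ca' →
    DistinctTriangles P L A B C A' B' C' ab bc ca ab' bc' ca' →
    PerspectiveFromCenter P L A B C A' B' C' ab bc ca ab' bc' ca' O →
    ∃ l : L, PerspectiveFromAxis P L A B C A' B' C' ab bc ca ab' bc' ca' l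

/-- `D` is the harmonic conjugate `h(A,B;C)` of `C` with respect to the distinct
points `A`, `B` : choosing a line `l` through `C` with `l ≠ AB` and a point `R`
outside both `AB` and `l`, and setting `Pp = BR·l`, `Q = AR·l`, `S = AP·BQ`,
the point `D` is `AB·RS`.  (By the invariance theorem this is independent of
the choices of `l` and `R`.) -/
def IsHarmonic (A B C D : P) : Prop :=
  A ≠ B ∧ ∃ (ab l : L) (R Pp Q S : P),
    A ∈ ab ∧ B ∈ ab ∧ C ∈ ab ∧ C ∈ l ∧ l ≠ ab ∧ R ∉ ab ∧ R ∉ l ∧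
    Pp ∈ l ∧ Col P L B R Pp ∧ Q ∈ l ∧ Col P L A R Q ∧
    Col P L A Pp S ∧ Col P L B Q S ∧ D ∈ ab ∧ Col P L R S D

/-- Fano's axiom: the three diagonal points of any quadrangle (four points, no
three collinear) are noncollinear. -/
def FanoAxiom : Prop :=
  ∀ E₁ E₂ E₃ E₄ X Y Z : P,
    ¬ Col P L E₁ E₂ E₃ → ¬ Col P L E₁ E₂ E₄ → ¬ Col P L E₁ E₃ E₄ → ¬ Col P L E₂ E₃ E₄ →
    Col P L E₁ E₂ X → Col P L E₃ E₄ X →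
    Col P L E₁ E₃ Y → Col P L E₂ E₄ Y →
    Col P L E₁ E₄ Z → Col P L E₂ E₃ Z →
    ¬ Col P L X Y Z

/-- The range of a line `l` : the points incident with `l`. -/
abbrev Rng (l : L) : Type _ := {X : P // X ∈ l}

/-- `f` is the perspectivity from the range of `l` to the range of `m` with
center `O`, a point outside both `l` and `m` : each point `X` of `l` is mapped
to the point `(OX)·m`, i.e. `O`, `X` and `f X` are collinear. -/
def IsPerspectivity (l m : L) (f : Rng P L l → Rng P L m) : Prop :=
  ∃ O : P, O ∉ l ∧ O ∉ m ∧
    ∀ X : Rng P L l, ∃ k : L, O ∈ k ∧ (X : P) ∈ k ∧ ((f X : P)) ∈ k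

/-- A projectivity between ranges of lines : a composite of finitely many
perspectivities. -/
inductive IsProjectivity : (l m : L) → (Rng P L l → Rng P L m) → Prop where
  | persp {l m : L} {f : Rng P L l → Rng P L m} :
      IsPerspectivity P L l m f → IsProjectivity l m f
  | comp {l m n : L} {f : Rng P L l → Rng P L m} {g : Rng P L m → Rng P L n} :
      IsProjectivity l m f → IsProjectivity m n g → IsProjectivity l n (g ∘ f)

set_option linter.unusedSectionVars false

namespace HarmAux
open Configuration Configuration.HasPoints Configuration.HasLines

variable {P L}
variable [Configuration.ProjectivePlane P L]

lemma line_eq {X Y : P} {k₁ k₂ : L} (h : X ≠ Y) (h1 : X ∈ k₁) (h2 : Y ∈ k₁)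
    (h3 : X ∈ k₂) (h4 : Y ∈ k₂) : k₁ = k₂ :=
  (Configuration.Nondegenerate.eq_or_eq h1 h2 h3 h4).resolve_left h

lemma pt_eq {X Y : P} {k₁ k₂ : L} (h : k₁ ≠ k₂) (h1 : X ∈ k₁) (h3 : X ∈ k₂)
    (h2 : Y ∈ k₁) (h4 : Y ∈ k₂) : X = Y :=
  (Configuration.Nondegenerate.eq_or_eq h1 h2 h3 h4).resolve_right h

/-- A fully unpacked harmonic configuration. -/
structure HCfg (A B C D : P) (ab l r m p q n : L) (R Pp Q S : P) : Prop where
  hA : A ∈ ab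
  hB : B ∈ ab
  hC : C ∈ ab
  hD : D ∈ ab
  hABne : A ≠ B
  hCA : C ≠ A
  hCB : C ≠ B
  hCl : C ∈ l
  hlab : l ≠ ab
  hRab : R ∉ ab
  hRl : R ∉ l
  hPl : Pp ∈ l
  hPr : Pp ∈ r
  hBr : B ∈ r
  hRr : R ∈ r
  hQl : Q ∈ l
  hQm : Q ∈ m
  hAm : A ∈ m
  hRm : R ∈ m
  hSp : S ∈ p
  hAp : A ∈ p
  hPp : Pp ∈ p
  hSq : S ∈ q
  hBq : B ∈ q
  hQq : Q ∈ q
  hDn : D ∈ n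
  hRn : R ∈ n
  hSn : S ∈ n

namespace HCfg

variable {A B C D R Pp Q S : P} {ab l r m p q n : L}
variable (H : HCfg (L := L) A B C D ab l r m p q n R Pp Q S)
include H

lemma RA : R ≠ A := fun h => H.hRab (h ▸ H.hA)
lemma RB : R ≠ B := fun h => H.hRab (h ▸ H.hB)
lemma RC : R ≠ C := fun h => H.hRab (h ▸ H.hC)
lemma Al : A ∉ l := fun h => H.hlab (line_eq (Ne.symm H.hCA) h H.hCl H.hA H.hC)
lemma Bl : B ∉ l := fun h => H.hlab (line_eq (Ne.symm H.hCB) h H.hCl H.hB H.hC)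
lemma rl : r ≠ l := fun h => H.hRl (h ▸ H.hRr)
lemma ml : m ≠ l := fun h => H.hRl (h ▸ H.hRm)
lemma rab : r ≠ ab := fun h => H.hRab (h ▸ H.hRr)
lemma mab : m ≠ ab := fun h => H.hRab (h ▸ H.hRm)
lemma nab : n ≠ ab := fun h => H.hRab (h ▸ H.hRn)
lemma Ar : A ∉ r := fun h => H.hRab ((line_eq H.hABne h H.hBr H.hA H.hB) ▸ H.hRr)
lemma Bm : B ∉ m := fun h => H.hRab ((line_eq H.hABne H.hAm h H.hA H.hB) ▸ H.hRm)
lemma rm : r ≠ m := fun h => H.Ar (h ▸ H.hAm)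
lemma PA : Pp ≠ A := fun h => H.Ar (h ▸ H.hPr)
lemma PB : Pp ≠ B := fun h => H.Bl (h ▸ H.hPl)
lemma QA : Q ≠ A := fun h => H.Al (h ▸ H.hQl)
lemma QB : Q ≠ B := fun h => H.Bm (h ▸ H.hQm)
lemma PR : Pp ≠ R := fun h => H.hRl (h ▸ H.hPl)
lemma QR : Q ≠ R := fun h => H.hRl (h ▸ H.hQl)
lemma Pab : Pp ∉ ab := fun h => H.PB (pt_eq H.rab H.hPr h H.hBr H.hB)
lemma Qab : Q ∉ ab := fun h => H.QA (pt_eq H.mab H.hQm h H.hAm H.hA)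
lemma PC : Pp ≠ C := fun h => H.Pab (h ▸ H.hC)
lemma QC : Q ≠ C := fun h => H.Qab (h ▸ H.hC)
lemma PQ : Pp ≠ Q := fun h => H.hRl ((pt_eq H.rm H.hPr (h ▸ H.hQm) H.hRr H.hRm) ▸ H.hPl)
lemma Pm : Pp ∉ m := fun h => H.PQ (pt_eq H.ml h H.hPl H.hQm H.hQl)
lemma Qr : Q ∉ r := fun h => H.PQ (pt_eq H.rl H.hPr H.hPl h H.hQl)
lemma pl : p ≠ l := fun h => H.Al (h ▸ H.hAp)
lemma pab : p ≠ ab := fun h => H.Pab (h ▸ H.hPp)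
lemma Bp : B ∉ p := fun h => H.Pab (line_eq H.hABne H.hAp h H.hA H.hB ▸ H.hPp)
lemma Aq : A ∉ q := fun h => H.Qab (line_eq H.hABne h H.hBq H.hA H.hB ▸ H.hQq)
lemma qab : q ≠ ab := fun h => H.Qab (h ▸ H.hQq)
lemma ql : q ≠ l := fun h => H.Bl (h ▸ H.hBq)
lemma pq : p ≠ q := fun h => H.Bp (h ▸ H.hBq)
lemma pr : p ≠ r := fun h => H.Ar (h ▸ H.hAp)
lemma pm : p ≠ m := fun h => H.Pm (h ▸ H.hPp)
lemma qm : q ≠ m := fun h => H.Bm (h ▸ H.hBq)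
lemma qr : q ≠ r := fun h => H.Qr (h ▸ H.hQq)
lemma Qp : Q ∉ p := fun h => H.PQ (pt_eq H.pl H.hPp H.hPl h H.hQl)
lemma Pq : Pp ∉ q := fun h => H.PQ (pt_eq H.ql h H.hPl H.hQq H.hQl)
lemma SA : S ≠ A := fun h => H.Aq (h ▸ H.hSq)
lemma SB : S ≠ B := fun h => H.Bp (h ▸ H.hSp)
lemma SP : S ≠ Pp := fun h => H.Pq (h ▸ H.hSq)
lemma SQ : S ≠ Q := fun h => H.Qp (h ▸ H.hSp)
lemma Sl : S ∉ l := fun h => H.SP (pt_eq H.pl H.hSp h H.hPp H.hPl)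
lemma Sab : S ∉ ab := fun h => H.SA (pt_eq H.pab H.hSp h H.hAp H.hA)
lemma SC : S ≠ C := fun h => H.Sab (h ▸ H.hC)
lemma Rp : R ∉ p := fun h => H.Pm ((line_eq H.RA h H.hAp H.hRm H.hAm) ▸ H.hPp)
lemma Rq : R ∉ q := fun h => H.qr (line_eq H.RB h H.hBq H.hRr H.hBr)
lemma SR : S ≠ R := fun h => H.Rp (h ▸ H.hSp)
lemma Sm : S ∉ m := fun h => H.SA (pt_eq H.pm H.hSp h H.hAp H.hAm)
lemma Sr : S ∉ r := fun h => H.SB (pt_eq H.qr H.hSq h H.hBq H.hBr)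
lemma nl : n ≠ l := fun h => H.hRl (h ▸ H.hRn)
lemma np : n ≠ p := fun h => H.Rp (h ▸ H.hRn)
lemma nq : n ≠ q := fun h => H.Rq (h ▸ H.hRn)
lemma nm : n ≠ m := fun h => H.Sm (h ▸ H.hSn)
lemma nr : n ≠ r := fun h => H.Sr (h ▸ H.hSn)
lemma Pn : Pp ∉ n := fun h => H.SP (pt_eq H.np H.hSn H.hSp h H.hPp)
lemma Qn : Q ∉ n := fun h => H.SQ (pt_eq H.nq H.hSn H.hSq h H.hQq)
lemma An : A ∉ n := fun h => H.nm (line_eq H.RA H.hRn h H.hRm H.hAm)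
lemma Bn : B ∉ n := fun h => H.nr (line_eq H.RB H.hRn h H.hRr H.hBr)
lemma DA : D ≠ A := fun h => H.An (h ▸ H.hDn)
lemma DB : D ≠ B := fun h => H.Bn (h ▸ H.hDn)

/-- Fano's axiom gives that the harmonic conjugate differs from the original point. -/
lemma DC (hfano : FanoAxiom P L) : D ≠ C := by
  intro h
  refine hfano Pp S R Q A B C ?_ ?_ ?_ ?_ ?_ ?_ ?_ ?_ ?_ ?_ ⟨ab, H.hA, H.hB, H.hC⟩
  · rintro ⟨k, h1, h2, h3⟩
    exact H.Rp ((line_eq (Ne.symm H.SP) h1 h2 H.hPp H.hSp) ▸ h3)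
  · rintro ⟨k, h1, h2, h3⟩
    exact H.Qp ((line_eq (Ne.symm H.SP) h1 h2 H.hPp H.hSp) ▸ h3)
  · rintro ⟨k, h1, h2, h3⟩
    exact H.Qr ((line_eq H.PR h1 h2 H.hPr H.hRr) ▸ h3)
  · rintro ⟨k, h1, h2, h3⟩
    exact H.Qn ((line_eq (Ne.symm H.SR) h2 h1 H.hRn H.hSn) ▸ h3)
  · exact ⟨p, H.hPp, H.hSp, H.hAp⟩
  · exact ⟨m, H.hRm, H.hQm, H.hAm⟩
  · exact ⟨r, H.hPr, H.hRr, H.hBr⟩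
  · exact ⟨q, H.hSq, H.hQq, H.hBq⟩
  · exact ⟨l, H.hPl, H.hQl, H.hCl⟩
  · exact ⟨n, H.hSn, H.hRn, h ▸ H.hDn⟩

/-- Symmetry: `C` is in turn the harmonic conjugate of `D`. -/
lemma symm : HCfg (L := L) A B D C ab n r p m q l Pp R S Q where
  hA := H.hA
  hB := H.hB
  hC := H.hD
  hD := H.hC
  hABne := H.hABne
  hCA := H.DA
  hCB := H.DB
  hCl := H.hDn
  hlab := H.nab
  hRab := H.Pab
  hRl := H.Pn
  hPl := H.hRn
  hPr := H.hRr
  hBr := H.hBr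
  hRr := H.hPr
  hQl := H.hSn
  hQm := H.hSp
  hAm := H.hAp
  hRm := H.hPp
  hSp := H.hQm
  hAp := H.hAm
  hPp := H.hRm
  hSq := H.hQq
  hBq := H.hBq
  hQq := H.hSq
  hDn := H.hCl
  hRn := H.hPl
  hSn := H.hQl

end HCfg

/-- Unpack `IsHarmonic` into a full configuration. -/
lemma hcfg_of_isHarmonic {A B C D : P} {ab : L} (hA : A ∈ ab) (hB : B ∈ ab)
    (hCA : C ≠ A) (hCB : C ≠ B) (h : IsHarmonic P L A B C D) :
    ∃ (l r m p q n : L) (R Pp Q S : P), HCfg (L := L) A B C D ab l r m p q n R Pp Q S := by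
  obtain ⟨hAB, ab₀, l, R, Pp, Q, S, h1, h2, h3, h4, h5, h6, h7, h8, ⟨r, hBr, hRr, hPr⟩,
    h9, ⟨m, hAm, hRm, hQm⟩, ⟨p, hAp, hPp, hSp⟩, ⟨q, hBq, hQq, hSq⟩, h10, ⟨n, hRn, hSn, hDn⟩⟩ := h
  obtain rfl : ab₀ = ab := line_eq hAB h1 h2 hA hB
  exact ⟨l, r, m, p, q, n, R, Pp, Q, S,
    ⟨hA, hB, h3, h10, hAB, hCA, hCB, h4, h5, h6, h7, h8, hPr, hBr, hRr, h9, hQm, hAm, hRm,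
      hSp, hAp, hPp, hSq, hBq, hQq, hDn, hRn, hSn⟩⟩

/-- Repack a configuration into `IsHarmonic`. -/
lemma isHarmonic_of_hcfg {A B C D R Pp Q S : P} {ab l r m p q n : L}
    (H : HCfg (L := L) A B C D ab l r m p q n R Pp Q S) : IsHarmonic P L A B C D :=
  ⟨H.hABne, ab, l, R, Pp, Q, S, H.hA, H.hB, H.hC, H.hCl, H.hlab, H.hRab, H.hRl,
    H.hPl, ⟨r, H.hBr, H.hRr, H.hPr⟩, H.hQl, ⟨m, H.hAm, H.hRm, H.hQm⟩,
    ⟨p, H.hAp, H.hPp, H.hSp⟩, ⟨q, H.hBq, H.hQq, H.hSq⟩, H.hD, ⟨n, H.hRn, H.hSn, H.hDn⟩⟩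

/-- Degenerate case: the harmonic conjugate of `A` is `A`. -/
lemma harm_self_A {A B D : P} (h : IsHarmonic P L A B A D) : D = A := by
  obtain ⟨hAB, ab, l, R, Pp, Q, S, h1, h2, _h3, h4, h5, h6, h7, h8, ⟨r, hBr, hRr, hPr⟩,
    h9, ⟨m, hAm, hRm, hQm⟩, ⟨p, hAp, hPp, hSp⟩, ⟨q, hBq, hQq, hSq⟩, h10, ⟨n, hRn, hSn, hDn⟩⟩ := h
  have hRA : R ≠ A := fun h => h6 (h ▸ h1)
  have hml : m ≠ l := fun h => h7 (h ▸ hRm)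
  obtain rfl : A = Q := (pt_eq hml hQm h9 hAm h4).symm
  have hAr : A ∉ r := fun h => h6 ((line_eq hAB h hBr h1 h2) ▸ hRr)
  have hPA : Pp ≠ A := fun h => hAr (h ▸ hPr)
  have hpl : p = l := line_eq (Ne.symm hPA) hAp hPp h4 h8
  have hqab : q = ab := line_eq hAB hQq hBq h1 h2
  obtain rfl : A = S := (pt_eq h5 (hpl ▸ hSp) (hqab ▸ hSq) h4 h1).symm
  have hnm : n = m := line_eq hRA hRn hSn hRm hAm
  have hmab : m ≠ ab := fun h => h6 (h ▸ hRm)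
  exact pt_eq hmab (hnm ▸ hDn) h10 hAm h1

/-- Degenerate case: the harmonic conjugate of `B` is `B`. -/
lemma harm_self_B {A B D : P} (h : IsHarmonic P L A B B D) : D = B := by
  obtain ⟨hAB, ab, l, R, Pp, Q, S, h1, h2, _h3, h4, h5, h6, h7, h8, ⟨r, hBr, hRr, hPr⟩,
    h9, ⟨m, hAm, hRm, hQm⟩, ⟨p, hAp, hPp, hSp⟩, ⟨q, hBq, hQq, hSq⟩, h10, ⟨n, hRn, hSn, hDn⟩⟩ := h
  have hRB : R ≠ B := fun h => h6 (h ▸ h2)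
  have hrl : r ≠ l := fun h => h7 (h ▸ hRr)
  have hBm : B ∉ m := fun h => h6 ((line_eq hAB hAm h h1 h2) ▸ hRm)
  have hQB : Q ≠ B := fun h => hBm (h ▸ hQm)
  obtain rfl : B = Pp := (pt_eq hrl hPr h8 hBr h4).symm
  have hpab : p = ab := line_eq hAB hAp hPp h1 h2
  have hqab : q ≠ ab := fun h => hQB (pt_eq h5 h9 (h ▸ hQq) h4 h2)
  obtain rfl : B = S := (pt_eq hqab hSq (hpab ▸ hSp) hBq h2).symm
  have hnr : n = r := line_eq hRB hRn hSn hRr hBr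
  have hrab : r ≠ ab := fun h => h6 (h ▸ hRr)
  exact pt_eq hrab (hnr ▸ hDn) h10 hBr h2

end HarmAux
namespace HarmAux
open Configuration Configuration.HasPoints Configuration.HasLines
variable {P L}
variable [Configuration.ProjectivePlane P L]

/-- Converse of Desargues's theorem: two distinct triangles that are perspective from
an axis are perspective from a centre (under suitable genericity hypotheses). -/
lemma converse_desargues (hdes : DesarguesProperty P L)
    {A B C A' B' C' : P} {ab bc ca ab' bc' ca' g : L}
    (T : IsTriangle P L A B C ab bc ca) (T' : IsTriangle P L A' B' C' ab' bc' ca')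
    (dist : DistinctTriangles P L A B C A' B' C' ab bc ca ab' bc' ca')
    (ax : PerspectiveFromAxis P L A B C A' B' C' ab bc ca ab' bc' ca' g)
    (c1 : A ∉ ca') (c2 : A' ∉ ca) (c3 : B ∉ bc') (c4 : B' ∉ bc)
    (c5 : C ∉ ca') (c6 : C' ∉ ca) (c7 : A' ∉ ab) (c8 : B' ∉ ab) (c9 : A ∉ ab') :
    ∃ O : P, (∀ k : L, A ∈ k → A' ∈ k → O ∈ k) ∧ (∀ k : L, B ∈ k → B' ∈ k → O ∈ k) ∧
      (∃ k : L, C ∈ k ∧ C' ∈ k ∧ O ∈ k) ∧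
      O ∉ ab ∧ O ∉ bc ∧ O ∉ ca ∧ O ∉ ab' ∧ O ∉ bc' ∧ O ∉ ca' := by
  obtain ⟨tAab, tBab, tBbc, tCbc, tCca, tAca, tAbc, tBca, tCab⟩ := T
  obtain ⟨tAab', tBab', tBbc', tCbc', tCca', tAca', tAbc', tBca', tCab'⟩ := T'
  obtain ⟨dA, dB, dC, dab, dbc, dca⟩ := dist
  obtain ⟨⟨ZZ, hZab, hZab', hZg⟩, ⟨XX, hXbc, hXbc', hXg⟩, ⟨YY, hYca, hYca', hYg⟩,
    nAg, nBg, nCg, nA'g, nB'g, nC'g⟩ := ax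
  have hAB : A ≠ B := fun h => tAbc (h ▸ tBbc)
  have hA'B' : A' ≠ B' := fun h => tAbc' (h ▸ tBbc')
  have hBC : B ≠ C := fun h => tCab (h ▸ tBab)
  have hB'C' : B' ≠ C' := fun h => tCab' (h ▸ tBab')
  set α := mkLine (P := P) (L := L) dA with hα
  set β := mkLine (P := P) (L := L) dB with hβ
  have hAα : A ∈ α := (mkLine_ax dA).1
  have hA'α : A' ∈ α := (mkLine_ax dA).2
  have hBβ : B ∈ β := (mkLine_ax dB).1
  have hB'β : B' ∈ β := (mkLine_ax dB).2
  have hAY : A ≠ YY := fun h => nAg (h ▸ hYg)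
  have hBX : B ≠ XX := fun h => nBg (h ▸ hXg)
  have hYα : YY ∉ α := fun h => c2 ((line_eq hAY hAα h tAca hYca) ▸ hA'α)
  have hXβ : XX ∉ β := fun h => c4 ((line_eq hBX hBβ h tBbc hXbc) ▸ hB'β)
  have cabc : ca ≠ bc := fun h => tBca (h ▸ tBbc)
  have cabc' : ca' ≠ bc' := fun h => tBca' (h ▸ tBbc')
  have hαab : α ≠ ab := fun h => c7 (h ▸ hA'α)
  have hαab' : α ≠ ab' := fun h => c9 (h ▸ hAα)
  have hβab : β ≠ ab := fun h => c8 (h ▸ hB'β)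
  have hβbc : β ≠ bc := fun h => c4 (h ▸ hB'β)
  have hβbc' : β ≠ bc' := fun h => c3 (h ▸ hBβ)
  have hαβ : α ≠ β := fun h => c7 ((line_eq hAB hAα (h ▸ hBβ) tAab tBab) ▸ hA'α)
  have hYX : YY ≠ XX := fun h => dC ((pt_eq cabc hYca (h ▸ hXbc) tCca tCbc).symm.trans
    (pt_eq cabc' hYca' (h ▸ hXbc') tCca' tCbc'))
  obtain ⟨h, ⟨X₁, hX₁α, hX₁β, hX₁h⟩, ⟨Y₁, hY₁ca', hY₁bc', hY₁h⟩, ⟨Z₁, hZ₁ca, hZ₁bc, hZ₁h⟩,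
      nAh, nA'h, nYh, nBh, nB'h, nXh⟩ :=
    hdes A A' YY B B' XX α ca' ca β bc' bc ZZ
      ⟨hAα, hA'α, tAca', hYca', hYca, tAca, c1, c2, hYα⟩
      ⟨hBβ, hB'β, tBbc', hXbc', hXbc, tBbc, c3, c4, hXβ⟩
      ⟨hAB, hA'B', hYX, hαβ, cabc', cabc⟩
      ⟨⟨ab, tAab, tBab, hZab⟩, ⟨ab', tAab', tBab', hZab'⟩, ⟨g, hYg, hXg, hZg⟩,
        fun hO => nAg ((pt_eq hαab hO hZab hAα tAab) ▸ hZg),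
        fun hO => nA'g ((pt_eq (fun e => tBca' (e ▸ tBab') : ca' ≠ ab') hO hZab' tAca' tAab') ▸ hZg),
        fun hO => nAg ((pt_eq (fun e => tBca (e ▸ tBab) : ca ≠ ab) hO hZab tAca tAab) ▸ hZg),
        fun hO => nBg ((pt_eq hβab hO hZab hBβ tBab) ▸ hZg),
        fun hO => nB'g ((pt_eq (fun e => tAbc' (e ▸ tAab') : bc' ≠ ab') hO hZab' tBbc' tBab') ▸ hZg),
        fun hO => nBg ((pt_eq (fun e => tAbc (e ▸ tAab) : bc ≠ ab) hO hZab tBbc tBab) ▸ hZg)⟩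
  have hC'h : C' ∈ h := (pt_eq cabc' hY₁ca' hY₁bc' tCca' tCbc') ▸ hY₁h
  have hCh : C ∈ h := (pt_eq cabc hZ₁ca hZ₁bc tCca tCbc) ▸ hZ₁h
  refine ⟨X₁, fun k h1 h2 => by rw [line_eq dA h1 h2 hAα hA'α]; exact hX₁α,
    fun k h1 h2 => by rw [line_eq dB h1 h2 hBβ hB'β]; exact hX₁β,
    ⟨h, hCh, hC'h, hX₁h⟩,
    fun hO => nAh ((pt_eq hαab hX₁α hO hAα tAab) ▸ hX₁h),
    fun hO => nBh ((pt_eq hβbc hX₁β hO hBβ tBbc) ▸ hX₁h),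
    fun hO => ?_,
    fun hO => nA'h ((pt_eq hαab' hX₁α hO hA'α tAab') ▸ hX₁h),
    fun hO => nB'h ((pt_eq hβbc' hX₁β hO hB'β tBbc') ▸ hX₁h),
    fun hO => ?_⟩
  · have e : X₁ = C := pt_eq (fun e => c6 (e ▸ hC'h) : h ≠ ca) hX₁h hO hCh tCca
    exact c4 ((line_eq hBC hBβ (e ▸ hX₁β) tBbc tCbc) ▸ hB'β)
  · have e : X₁ = C' := pt_eq (fun e => c5 (e ▸ hCh) : h ≠ ca') hX₁h hO hC'h tCca'
    exact c3 ((line_eq hB'C' hB'β (e ▸ hX₁β) tBbc' tCbc') ▸ hBβ)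

end HarmAux
namespace HarmAux
open Configuration Configuration.HasPoints Configuration.HasLines
variable {P L}
variable [Configuration.ProjectivePlane P L]

/-- Changing the auxiliary line while keeping the auxiliary point `R` does not change
the harmonic conjugate. -/
lemma sameR (hdes : DesarguesProperty P L)
    {A B C D D' R Pp Q S Pp' Q' S' : P} {ab l r m p q n l' p' q' n' : L}
    (H : HCfg (L := L) A B C D ab l r m p q n R Pp Q S)
    (H' : HCfg (L := L) A B C D' ab l' r m p' q' n' R Pp' Q' S')
    (e1 : Pp ∉ l') (e2 : Q ∉ l') : D = D' := by
  have hPP' : Pp ≠ Pp' := fun e => e1 (e.symm ▸ H'.hPl)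
  have hQQ' : Q ≠ Q' := fun e => e2 (e.symm ▸ H'.hQl)
  have hll' : l ≠ l' := fun e => e1 (e ▸ H.hPl)
  have hpp' : p ≠ p' := fun e => hPP' (pt_eq H.pr (e.symm ▸ H'.hPp) H'.hPr H.hPp H.hPr).symm
  have hqq' : q ≠ q' := fun e => hQQ' (pt_eq H.qm (e.symm ▸ H'.hQq) H'.hQm H.hQq H.hQm).symm
  have hSS' : S ≠ S' := fun e => H.SA (pt_eq hpp' H.hSp (e.symm ▸ H'.hSp) H.hAp H'.hAp)
  obtain ⟨O, hO1, hO2, ⟨k, hSk, hS'k, hOk⟩, -, -, -, -, -, -⟩ :=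
    converse_desargues hdes
      (⟨H.hPl, H.hQl, H.hQq, H.hSq, H.hSp, H.hPp, H.Pq, H.Qp, H.Sl⟩ :
        IsTriangle P L Pp Q S l q p)
      (⟨H'.hPl, H'.hQl, H'.hQq, H'.hSq, H'.hSp, H'.hPp, H'.Pq, H'.Qp, H'.Sl⟩ :
        IsTriangle P L Pp' Q' S' l' q' p')
      ⟨hPP', hQQ', hSS', hll', hqq', hpp'⟩
      ⟨⟨C, H.hCl, H'.hCl, H.hC⟩, ⟨B, H.hBq, H'.hBq, H.hB⟩, ⟨A, H.hAp, H'.hAp, H.hA⟩,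
        H.Pab, H.Qab, H.Sab, H'.Pab, H'.Qab, H'.Sab⟩
      (fun h => hpp' (line_eq (Ne.symm H.PA) H'.hAp h H.hAp H.hPp).symm)
      (fun h => hPP' (pt_eq H.pr h H'.hPr H.hPp H.hPr).symm)
      (fun h => hqq' (line_eq (Ne.symm H.QB) H'.hBq h H.hBq H.hQq).symm)
      (fun h => hQQ' (pt_eq H.qm h H'.hQm H.hQq H.hQm).symm)
      (fun h => hpp' (line_eq (Ne.symm H.SA) H'.hAp h H.hAp H.hSp).symm)
      (fun h => H'.SA (pt_eq (Ne.symm hpp') H'.hSp h H'.hAp H.hAp))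
      (fun h => hPP' (pt_eq H.rl H.hPr H.hPl H'.hPr h))
      (fun h => hQQ' (pt_eq H.ml H.hQm H.hQl H'.hQm h))
      e1
  have hOr : O ∈ r := hO1 r H.hPr H'.hPr
  have hOm : O ∈ m := hO2 m H.hQm H'.hQm
  have hOR : O = R := pt_eq H.rm hOr hOm H.hRr H.hRm
  have hkn : k = n := line_eq H.SR hSk (hOR ▸ hOk) H.hSn H.hRn
  have hnn' : n = n' := line_eq H'.SR (hkn ▸ hS'k) (hOR ▸ hkn ▸ hOk) H'.hSn H'.hRn
  exact pt_eq H.nab H.hDn H.hD (hnn'.symm ▸ H'.hDn) H'.hD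

/-- The generic step : two harmonic configurations in sufficiently general position
give the same harmonic conjugate. -/
lemma genStep (hdes : DesarguesProperty P L)
    {A B C D D' R Pp Q S R' Pp' Q' S' : P} {ab l r m p q n l' r' m' p' q' n' : L}
    (H : HCfg (L := L) A B C D ab l r m p q n R Pp Q S)
    (H' : HCfg (L := L) A B C D' ab l' r' m' p' q' n' R' Pp' Q' S')
    (g1 : Pp' ∉ l) (g2 : Q' ∉ l) (g3 : Pp ∉ l')
    (g4 : Pp' ∉ p) (g5 : Q' ∉ q) (g6 : Pp' ∉ r) (g7 : Q' ∉ m) : D = D' := by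
  have hPP' : Pp ≠ Pp' := fun e => g1 (e ▸ H.hPl)
  have hQQ' : Q ≠ Q' := fun e => g2 (e ▸ H.hQl)
  have hll' : l ≠ l' := fun e => g3 (e ▸ H.hPl)
  have hpp' : p ≠ p' := fun e => g4 (e.symm ▸ H'.hPp)
  have hqq' : q ≠ q' := fun e => g5 (e.symm ▸ H'.hQq)
  have hrr' : r ≠ r' := fun e => g6 (e.symm ▸ H'.hPr)
  have hmm' : m ≠ m' := fun e => g7 (e.symm ▸ H'.hQm)
  have d1 : Pp ∉ p' := fun h => hpp' (line_eq (Ne.symm H.PA) H'.hAp h H.hAp H.hPp).symm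
  have d2 : Q ∉ q' := fun h => hqq' (line_eq (Ne.symm H.QB) H'.hBq h H.hBq H.hQq).symm
  have d3 : S ∉ p' := fun h => hpp' (line_eq (Ne.symm H.SA) H'.hAp h H.hAp H.hSp).symm
  have d4 : S' ∉ p := fun h => H'.SA (pt_eq (Ne.symm hpp') H'.hSp h H'.hAp H.hAp)
  have d5 : Pp ∉ r' := fun h => hrr' (line_eq (Ne.symm H.PB) H'.hBr h H.hBr H.hPr).symm
  have d6 : Q ∉ m' := fun h => hmm' (line_eq (Ne.symm H.QA) H'.hAm h H.hAm H.hQm).symm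
  have d7 : R ∉ r' := fun h => hrr' (line_eq (Ne.symm H.RB) H'.hBr h H.hBr H.hRr).symm
  have d8 : R' ∉ r := fun h => hrr' (line_eq (Ne.symm H'.RB) H.hBr h H'.hBr H'.hRr)
  have d9 : R' ∉ m := fun h => hmm' (line_eq (Ne.symm H'.RA) H.hAm h H'.hAm H'.hRm)
  have hRR' : R ≠ R' := fun e => d8 (e ▸ H.hRr)
  have hSS' : S ≠ S' := fun e => H.SA (pt_eq hpp' H.hSp (e.symm ▸ H'.hSp) H.hAp H'.hAp)
  obtain ⟨O₁, hO1P, hO1Q, ⟨kS, hSkS, hS'kS, hO1kS⟩, nO1l, nO1q, nO1p, nO1l', nO1q', nO1p'⟩ :=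
    converse_desargues hdes
      (⟨H.hPl, H.hQl, H.hQq, H.hSq, H.hSp, H.hPp, H.Pq, H.Qp, H.Sl⟩ :
        IsTriangle P L Pp Q S l q p)
      (⟨H'.hPl, H'.hQl, H'.hQq, H'.hSq, H'.hSp, H'.hPp, H'.Pq, H'.Qp, H'.Sl⟩ :
        IsTriangle P L Pp' Q' S' l' q' p')
      ⟨hPP', hQQ', hSS', hll', hqq', hpp'⟩
      ⟨⟨C, H.hCl, H'.hCl, H.hC⟩, ⟨B, H.hBq, H'.hBq, H.hB⟩, ⟨A, H.hAp, H'.hAp, H.hA⟩,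
        H.Pab, H.Qab, H.Sab, H'.Pab, H'.Qab, H'.Sab⟩
      d1 g4 d2 g5 d3 d4 g1 g2 g3
  obtain ⟨O₂, hO2P, hO2Q, ⟨kR, hRkR, hR'kR, hO2kR⟩, nO2l, nO2m, nO2r, nO2l', nO2m', nO2r'⟩ :=
    converse_desargues hdes
      (⟨H.hPl, H.hQl, H.hQm, H.hRm, H.hRr, H.hPr, H.Pm, H.Qr, H.hRl⟩ :
        IsTriangle P L Pp Q R l m r)
      (⟨H'.hPl, H'.hQl, H'.hQm, H'.hRm, H'.hRr, H'.hPr, H'.Pm, H'.Qr, H'.hRl⟩ :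
        IsTriangle P L Pp' Q' R' l' m' r')
      ⟨hPP', hQQ', hRR', hll', hmm', hrr'⟩
      ⟨⟨C, H.hCl, H'.hCl, H.hC⟩, ⟨A, H.hAm, H'.hAm, H.hA⟩, ⟨B, H.hBr, H'.hBr, H.hB⟩,
        H.Pab, H.Qab, H.hRab, H'.Pab, H'.Qab, H'.hRab⟩
      d5 g6 d6 g7 d7 d8 g1 g2 g3
  set kP := mkLine (P := P) (L := L) hPP' with hkPdef
  set kQ := mkLine (P := P) (L := L) hQQ' with hkQdef
  have hPkP : Pp ∈ kP := (mkLine_ax hPP').1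
  have hP'kP : Pp' ∈ kP := (mkLine_ax hPP').2
  have hQkQ : Q ∈ kQ := (mkLine_ax hQQ').1
  have hQ'kQ : Q' ∈ kQ := (mkLine_ax hQQ').2
  have hkPkQ : kP ≠ kQ := fun e =>
    g1 ((line_eq H.PQ hPkP (e ▸ hQkQ) H.hPl H.hQl) ▸ hP'kP)
  have hOO : O₁ = O₂ :=
    pt_eq hkPkQ (hO1P kP hPkP hP'kP) (hO1Q kQ hQkQ hQ'kQ)
      (hO2P kP hPkP hP'kP) (hO2Q kQ hQkQ hQ'kQ)
  by_cases hnn' : n = n'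
  · exact pt_eq H.nab H.hDn H.hD (hnn'.symm ▸ H'.hDn) H'.hD
  have hO1kQ : O₁ ∈ kQ := hO1Q kQ hQkQ hQ'kQ
  have hO2kR : O₁ ∈ kR := hOO ▸ hO2kR
  have nO1n : O₁ ∉ n := by
    intro hOn
    have hOS : O₁ ≠ S := fun e =>
      g5 ((line_eq (Ne.symm H.SQ) hQkQ (e ▸ hO1kQ) H.hQq H.hSq) ▸ hQ'kQ)
    have hS'n : S' ∈ n := (line_eq hOS hO1kS hSkS hOn H.hSn) ▸ hS'kS
    have hOR : O₁ ≠ R := fun e =>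
      g7 ((line_eq H.QR hQkQ (e ▸ hO1kQ) H.hQm H.hRm) ▸ hQ'kQ)
    have hR'n : R' ∈ n := (line_eq hOR hO2kR hRkR hOn H.hRn) ▸ hR'kR
    exact hnn' (line_eq (Ne.symm H'.SR) hR'n hS'n H'.hRn H'.hSn)
  have nO1n' : O₁ ∉ n' := by
    intro hOn
    have hOS' : O₁ ≠ S' := fun e =>
      d2 ((line_eq (Ne.symm H'.SQ) hQ'kQ (e ▸ hO1kQ) H'.hQq H'.hSq) ▸ hQkQ)
    have hSn' : S ∈ n' := (line_eq hOS' hO1kS hS'kS hOn H'.hSn) ▸ hSkS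
    have hOR' : O₁ ≠ R' := fun e =>
      d6 ((line_eq H'.QR hQ'kQ (e ▸ hO1kQ) H'.hQm H'.hRm) ▸ hQkQ)
    have hRn' : R ∈ n' := (line_eq hOR' hO2kR hR'kR hOn H'.hRn) ▸ hRkR
    exact hnn' (line_eq (Ne.symm H.SR) hRn' hSn' H.hRn H.hSn).symm
  obtain ⟨h₃, ⟨X₃, hX₃m, hX₃m', hX₃h⟩, ⟨Y₃, hY₃n, hY₃n', hY₃h⟩, ⟨Z₃, hZ₃q, hZ₃q', hZ₃h⟩,
      -, -, -, -, -, -⟩ :=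
    hdes Q R S Q' R' S' m n q m' n' q' O₁
      ⟨H.hQm, H.hRm, H.hRn, H.hSn, H.hSq, H.hQq, H.Qn, H.Rq, H.Sm⟩
      ⟨H'.hQm, H'.hRm, H'.hRn, H'.hSn, H'.hSq, H'.hQq, H'.Qn, H'.Rq, H'.Sm⟩
      ⟨hQQ', hRR', hSS', hmm', hnn', hqq'⟩
      ⟨⟨kQ, hQkQ, hQ'kQ, hO1kQ⟩, ⟨kR, hRkR, hR'kR, hO2kR⟩, ⟨kS, hSkS, hS'kS, hO1kS⟩,
        hOO ▸ nO2m, nO1n, nO1q, hOO ▸ nO2m', nO1n', nO1q'⟩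
  have hAh : A ∈ h₃ := (pt_eq hmm' hX₃m hX₃m' H.hAm H'.hAm) ▸ hX₃h
  have hBh : B ∈ h₃ := (pt_eq hqq' hZ₃q hZ₃q' H.hBq H'.hBq) ▸ hZ₃h
  have hhab : h₃ = ab := line_eq H.hABne hAh hBh H.hA H.hB
  have e1 : Y₃ = D := pt_eq H.nab hY₃n (hhab ▸ hY₃h) H.hDn H.hD
  have e2 : Y₃ = D' := pt_eq H'.nab hY₃n' (hhab ▸ hY₃h) H'.hDn H'.hD
  exact e1.symm.trans e2

end HarmAux
namespace HarmAux
open Configuration Configuration.HasPoints Configuration.HasLines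
variable {P L}
variable [Configuration.ProjectivePlane P L]

/-- On any line we can find a point avoiding at most seven bad points. -/
lemma avoid_on_line (h8 : LinesHaveAtLeast P L 8) (t : L) (bad : List P)
    (hb : bad.length ≤ 7) : ∃ X : P, X ∈ t ∧ ∀ y ∈ bad, X ≠ y := by
  classical
  obtain ⟨s, hs, hmem⟩ := h8 t
  by_contra hcon
  push_neg at hcon
  have hsub : s ⊆ bad.toFinset := by
    intro X hX
    obtain ⟨y, hy, he⟩ := hcon X (hmem X hX)
    exact List.mem_toFinset.mpr (he.symm ▸ hy)
  have h1 := Finset.card_le_card hsub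
  have h2 := bad.toFinset_card_le
  omega

/-- Through any point of `ab` there is a line, different from `ab`, avoiding
at most six bad points (none equal to that point). -/
lemma avoid_line_through (h8 : LinesHaveAtLeast P L 8) {C : P} {ab : L} (hC : C ∈ ab)
    (bad : List P) (hb : bad.length ≤ 6) (hbad : ∀ y ∈ bad, y ≠ C) :
    ∃ l' : L, C ∈ l' ∧ l' ≠ ab ∧ ∀ y ∈ bad, y ∉ l' := by
  classical
  obtain ⟨t, hCt⟩ := Configuration.Nondegenerate.exists_line (P := P) (L := L) C
  have habt : ab ≠ t := fun e => hCt (e ▸ hC)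
  set f : P → P := fun y =>
    if h : y = C then C else
      mkPoint (show mkLine (Ne.symm h) ≠ t from fun e => hCt (e ▸ (mkLine_ax (Ne.symm h)).1))
    with hf
  obtain ⟨X, hXt, hXne⟩ := avoid_on_line h8 t (mkPoint habt :: bad.map f)
    (by simp only [List.length_cons, List.length_map]; omega)
  have hCX : C ≠ X := fun e => hCt (e ▸ hXt)
  refine ⟨mkLine hCX, (mkLine_ax hCX).1, ?_, ?_⟩
  · intro e
    exact hXne (mkPoint habt) List.mem_cons_self
      (pt_eq habt (e ▸ (mkLine_ax hCX).2) hXt (mkPoint_ax habt).1 (mkPoint_ax habt).2)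
  · intro y hy hyl
    have hyC : y ≠ C := hbad y hy
    have klne : mkLine (L := L) (Ne.symm hyC) ≠ t :=
      fun e => hCt (e ▸ (mkLine_ax (Ne.symm hyC)).1)
    have hline : mkLine (L := L) (Ne.symm hyC) = mkLine (L := L) hCX :=
      line_eq (Ne.symm hyC) (mkLine_ax (Ne.symm hyC)).1 (mkLine_ax (Ne.symm hyC)).2
        (mkLine_ax hCX).1 hyl
    have hfy : f y = mkPoint klne := by simp only [hf]; exact dif_neg hyC
    have h1 : f y ∈ mkLine (L := L) hCX := by rw [hfy]; exact hline ▸ (mkPoint_ax klne).1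
    have h2 : f y ∈ t := by rw [hfy]; exact (mkPoint_ax klne).2
    have hlt : mkLine (L := L) hCX ≠ t := fun e => hCt (e ▸ (mkLine_ax hCX).1)
    exact hXne (f y) (List.mem_cons_of_mem _ (List.mem_map_of_mem (f := f) hy))
      (pt_eq hlt (mkLine_ax hCX).2 hXt h1 h2)

/-- Construct a harmonic configuration from a line through `C` and a point `R`. -/
lemma construct {A B C R : P} {ab l r m : L} (hA : A ∈ ab) (hB : B ∈ ab) (hC : C ∈ ab)
    (hAB : A ≠ B) (hCA : C ≠ A) (hCB : C ≠ B) (hCl : C ∈ l) (hlab : l ≠ ab)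
    (hRab : R ∉ ab) (hRl : R ∉ l) (hBr : B ∈ r) (hRr : R ∈ r) (hAm : A ∈ m)
    (hRm : R ∈ m) :
    ∃ (p q n : L) (Pp Q S D : P), HCfg (L := L) A B C D ab l r m p q n R Pp Q S := by
  have hrl : r ≠ l := fun e => hRl (e ▸ hRr)
  have hml : m ≠ l := fun e => hRl (e ▸ hRm)
  have hRA : R ≠ A := fun e => hRab (e ▸ hA)
  have hAr : A ∉ r := fun e => hRab ((line_eq hAB e hBr hA hB) ▸ hRr)
  have hrm : r ≠ m := fun e => hAr (e ▸ hAm)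
  set Pp := mkPoint (P := P) hrl with hPdef
  have hPr : Pp ∈ r := (mkPoint_ax hrl).1
  have hPl : Pp ∈ l := (mkPoint_ax hrl).2
  set Q := mkPoint (P := P) hml with hQdef
  have hQm : Q ∈ m := (mkPoint_ax hml).1
  have hQl : Q ∈ l := (mkPoint_ax hml).2
  have hPA : Pp ≠ A := fun e => hAr (e ▸ hPr)
  have hBm : B ∉ m := fun e => hRab ((line_eq hAB hAm e hA hB) ▸ hRm)
  have hQB : Q ≠ B := fun e => hBm (e ▸ hQm)
  have hPQ : Pp ≠ Q := fun e => hRl ((pt_eq hrm hPr (e ▸ hQm) hRr hRm) ▸ hPl)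
  set p := mkLine (L := L) (Ne.symm hPA) with hpdef
  have hAp : A ∈ p := (mkLine_ax (Ne.symm hPA)).1
  have hPp : Pp ∈ p := (mkLine_ax (Ne.symm hPA)).2
  set q := mkLine (L := L) (Ne.symm hQB) with hqdef
  have hBq : B ∈ q := (mkLine_ax (Ne.symm hQB)).1
  have hQq : Q ∈ q := (mkLine_ax (Ne.symm hQB)).2
  have hpq : p ≠ q := by
    intro e
    have hBp : B ∈ p := e.symm ▸ hBq
    have hpab : p = ab := line_eq hAB hAp hBp hA hB
    have hPC : Pp = C := pt_eq hlab hPl (hpab ▸ hPp) hCl hC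
    have hCr : C ∈ r := hPC ▸ hPr
    exact hRab ((line_eq (Ne.symm hCB) hBr hCr hB hC) ▸ hRr)
  set S := mkPoint (P := P) hpq with hSdef
  have hSp : S ∈ p := (mkPoint_ax hpq).1
  have hSq : S ∈ q := (mkPoint_ax hpq).2
  have hPm : Pp ∉ m := fun h => hPQ (pt_eq hml h hPl hQm hQl)
  have hRp : R ∉ p := fun h => hPm ((line_eq hRA h hAp hRm hAm) ▸ hPp)
  have hSR : S ≠ R := fun e => hRp (e ▸ hSp)
  set n := mkLine (L := L) (Ne.symm hSR) with hndef
  have hRn : R ∈ n := (mkLine_ax (Ne.symm hSR)).1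
  have hSn : S ∈ n := (mkLine_ax (Ne.symm hSR)).2
  have hnab : n ≠ ab := fun e => hRab (e ▸ hRn)
  refine ⟨p, q, n, Pp, Q, S, mkPoint hnab, ?_⟩
  exact ⟨hA, hB, hC, (mkPoint_ax hnab).2, hAB, hCA, hCB, hCl, hlab, hRab, hRl, hPl, hPr,
    hBr, hRr, hQl, hQm, hAm, hRm, hSp, hAp, hPp, hSq, hBq, hQq, (mkPoint_ax hnab).1,
    hRn, hSn⟩

end HarmAux
namespace HarmAux
open Configuration Configuration.HasPoints Configuration.HasLines
variable {P L}
variable [Configuration.ProjectivePlane P L]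

lemma off_line {t k : L} {X : P} (hkt : k ≠ t) (hXt : X ∈ t) (hne : X ≠ mkPoint hkt) :
    X ∉ k := fun h => hne (pt_eq hkt h hXt (mkPoint_ax hkt).1 (mkPoint_ax hkt).2)

/-- The harmonic conjugate is unique. -/
theorem harm_unique (hdes : DesarguesProperty P L) (h8 : LinesHaveAtLeast P L 8)
    {A B C D D' : P} (h : IsHarmonic P L A B C D) (h' : IsHarmonic P L A B C D') :
    D = D' := by
  by_cases hCA : C = A
  · subst hCA; rw [harm_self_A h, harm_self_A h']
  by_cases hCB : C = B
  · subst hCB; rw [harm_self_B h, harm_self_B h']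
  obtain ⟨hAB, ab, l0, R0, P0, Q0, S0, hA, hB, hC, -⟩ := id h
  obtain ⟨l, r, m, p, q, n, R, Pp, Q, S, H⟩ := hcfg_of_isHarmonic hA hB hCA hCB h
  obtain ⟨lB, rB, mB, pB, qB, nB, RB, PpB, QB, SB, HB⟩ := hcfg_of_isHarmonic hA hB hCA hCB h'
  -- Step 1 : a fresh line through C avoiding Pp, Q, R, RB.
  obtain ⟨l1, hCl1, hl1ab, hav1⟩ := avoid_line_through h8 hC [Pp, Q, R, RB] (by simp)
    (by intro y hy; simp only [List.mem_cons, List.not_mem_nil, or_false] at hy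
        rcases hy with rfl | rfl | rfl | rfl
        exacts [H.PC, H.QC, H.RC, HB.RC])
  have hAl1 : A ∉ l1 := fun e => hl1ab (line_eq (Ne.symm hCA) e hCl1 hA hC)
  have hBl1 : B ∉ l1 := fun e => hl1ab (line_eq (Ne.symm hCB) e hCl1 hB hC)
  obtain ⟨p1, q1, n1, Pp1, Q1, S1, D1, H1⟩ := construct hA hB hC hAB hCA hCB hCl1 hl1ab
    H.hRab (hav1 R (by simp)) H.hBr H.hRr H.hAm H.hRm
  have eq1 : D = D1 := sameR hdes H H1 (hav1 Pp (by simp)) (hav1 Q (by simp))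
  -- the line through C and RB
  have hCRB : C ≠ RB := Ne.symm HB.RC
  set l3 := mkLine (L := L) hCRB with hl3def
  have hCl3 : C ∈ l3 := (mkLine_ax hCRB).1
  have hRBl3 : RB ∈ l3 := (mkLine_ax hCRB).2
  have hl3ab : l3 ≠ ab := fun e => HB.hRab (e ▸ hRBl3)
  have hAl3 : A ∉ l3 := fun e => hl3ab (line_eq (Ne.symm hCA) e hCl3 hA hC)
  have hBl3 : B ∉ l3 := fun e => hl3ab (line_eq (Ne.symm hCB) e hCl3 hB hC)
  have hl3l1 : l3 ≠ l1 := fun e => hav1 RB (by simp) (e ▸ hRBl3)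
  -- Step 2 : choose Rm on l1 avoiding the lines ab, m, r, mB, rB, l3.
  have habl1 : ab ≠ l1 := Ne.symm hl1ab
  have hml1 : m ≠ l1 := fun e => hAl1 (e ▸ H.hAm)
  have hrl1 : r ≠ l1 := fun e => hBl1 (e ▸ H.hBr)
  have hmBl1 : mB ≠ l1 := fun e => hAl1 (e ▸ HB.hAm)
  have hrBl1 : rB ≠ l1 := fun e => hBl1 (e ▸ HB.hBr)
  obtain ⟨Rm, hRml1, havm⟩ := avoid_on_line h8 l1
    [mkPoint habl1, mkPoint hml1, mkPoint hrl1, mkPoint hmBl1, mkPoint hrBl1,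
      mkPoint hl3l1] (by simp)
  have hRmab : Rm ∉ ab := off_line habl1 hRml1 (havm _ (by simp))
  have hRmm : Rm ∉ m := off_line hml1 hRml1 (havm _ (by simp))
  have hRmr : Rm ∉ r := off_line hrl1 hRml1 (havm _ (by simp))
  have hRmmB : Rm ∉ mB := off_line hmBl1 hRml1 (havm _ (by simp))
  have hRmrB : Rm ∉ rB := off_line hrBl1 hRml1 (havm _ (by simp))
  have hRml3 : Rm ∉ l3 := off_line hl3l1 hRml1 (havm _ (by simp))
  have hRmA : Rm ≠ A := fun e => hRmab (e ▸ hA)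
  have hRmB : Rm ≠ B := fun e => hRmab (e ▸ hB)
  set r2 := mkLine (L := L) (Ne.symm hRmB) with hr2def
  have hBr2 : B ∈ r2 := (mkLine_ax (Ne.symm hRmB)).1
  have hRmr2 : Rm ∈ r2 := (mkLine_ax (Ne.symm hRmB)).2
  set m2 := mkLine (L := L) (Ne.symm hRmA) with hm2def
  have hAm2 : A ∈ m2 := (mkLine_ax (Ne.symm hRmA)).1
  have hRmm2 : Rm ∈ m2 := (mkLine_ax (Ne.symm hRmA)).2
  -- Step 3 : choose l2 through C avoiding Pp1, Rm, and four intersection points.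
  have hAr2 : A ∉ r2 := fun e => hRmab ((line_eq hAB e hBr2 hA hB) ▸ hRmr2)
  have hBm2 : B ∉ m2 := fun e => hRmab ((line_eq hAB hAm2 e hA hB) ▸ hRmm2)
  have hr2p1 : r2 ≠ p1 := fun e => hAr2 (e.symm ▸ H1.hAp)
  have hm2q1 : m2 ≠ q1 := fun e => hBm2 (e.symm ▸ H1.hBq)
  have hl3r2 : l3 ≠ r2 := fun e => hBl3 (e.symm ▸ hBr2)
  have hl3m2 : l3 ≠ m2 := fun e => hAl3 (e.symm ▸ hAm2)
  have hCp1 : C ∉ p1 := fun e => H1.pab (line_eq (Ne.symm hCA) H1.hAp e hA hC)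
  have hCq1 : C ∉ q1 := fun e => H1.qab (line_eq (Ne.symm hCB) H1.hBq e hB hC)
  have hCr2 : C ∉ r2 := fun e => hRmab ((line_eq (Ne.symm hCB) hBr2 e hB hC) ▸ hRmr2)
  have hCm2 : C ∉ m2 := fun e => hRmab ((line_eq (Ne.symm hCA) hAm2 e hA hC) ▸ hRmm2)
  obtain ⟨l2, hCl2, hl2ab, hav2⟩ := avoid_line_through h8 hC
    [Pp1, Rm, mkPoint hr2p1, mkPoint hm2q1, mkPoint hl3r2, mkPoint hl3m2] (by simp)
    (by intro y hy; simp only [List.mem_cons, List.not_mem_nil, or_false] at hy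
        rcases hy with rfl | rfl | rfl | rfl | rfl | rfl
        · exact H1.PC
        · exact fun e => hRmab (e ▸ hC)
        · exact fun e => hCp1 (e ▸ (mkPoint_ax hr2p1).2)
        · exact fun e => hCq1 (e ▸ (mkPoint_ax hm2q1).2)
        · exact fun e => hCr2 (e ▸ (mkPoint_ax hl3r2).2)
        · exact fun e => hCm2 (e ▸ (mkPoint_ax hl3m2).2))
  have hAl2 : A ∉ l2 := fun e => hl2ab (line_eq (Ne.symm hCA) e hCl2 hA hC)
  have hBl2 : B ∉ l2 := fun e => hl2ab (line_eq (Ne.symm hCB) e hCl2 hB hC)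
  obtain ⟨p2, q2, n2, Pp2, Q2, S2, D2, H2⟩ := construct hA hB hC hAB hCA hCB hCl2 hl2ab
    hRmab (hav2 Rm (by simp)) hBr2 hRmr2 hAm2 hRmm2
  have hr2l1 : r2 ≠ l1 := fun e => hBl1 (e ▸ hBr2)
  have hm2l1 : m2 ≠ l1 := fun e => hAl1 (e ▸ hAm2)
  have eq2 : D1 = D2 := by
    refine genStep hdes H1 H2 ?_ ?_ (hav2 Pp1 (by simp)) ?_ ?_ ?_ ?_
    · exact fun e => H2.hRl ((pt_eq hr2l1 H2.hPr e hRmr2 hRml1) ▸ H2.hPl)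
    · exact fun e => H2.hRl ((pt_eq hm2l1 H2.hQm e hRmm2 hRml1) ▸ H2.hQl)
    · exact fun e => hav2 (mkPoint hr2p1) (by simp)
        ((pt_eq hr2p1 H2.hPr e (mkPoint_ax hr2p1).1 (mkPoint_ax hr2p1).2) ▸ H2.hPl)
    · exact fun e => hav2 (mkPoint hm2q1) (by simp)
        ((pt_eq hm2q1 H2.hQm e (mkPoint_ax hm2q1).1 (mkPoint_ax hm2q1).2) ▸ H2.hQl)
    · exact fun e => hBl2 ((pt_eq (show r2 ≠ r from fun e' => hRmr (e' ▸ hRmr2))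
        H2.hPr e hBr2 H.hBr) ▸ H2.hPl)
    · exact fun e => hAl2 ((pt_eq (show m2 ≠ m from fun e' => hRmm (e' ▸ hRmm2))
        H2.hQm e hAm2 H.hAm) ▸ H2.hQl)
  -- Step 4 : the configuration on l3 with the same Rm.
  obtain ⟨p3, q3, n3, Pp3, Q3, S3, D3, H3⟩ := construct hA hB hC hAB hCA hCB hCl3 hl3ab
    hRmab hRml3 hBr2 hRmr2 hAm2 hRmm2
  have eq3 : D2 = D3 := by
    refine sameR hdes H2 H3 ?_ ?_
    · exact fun e => hav2 (mkPoint hl3r2) (by simp)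
        ((pt_eq (Ne.symm hl3r2) H2.hPr e (mkPoint_ax hl3r2).2 (mkPoint_ax hl3r2).1) ▸ H2.hPl)
    · exact fun e => hav2 (mkPoint hl3m2) (by simp)
        ((pt_eq (Ne.symm hl3m2) H2.hQm e (mkPoint_ax hl3m2).2 (mkPoint_ax hl3m2).1) ▸ H2.hQl)
  -- Step 5 : choose l4 through C avoiding Pp3, W5, W6, PpB, QB, RB.
  have hrBp3 : rB ≠ p3 := fun e => HB.Ar (e ▸ H3.hAp)
  have hmBq3 : mB ≠ q3 := fun e => HB.Bm (e ▸ H3.hBq)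
  have hCp3 : C ∉ p3 := fun e => H3.pab (line_eq (Ne.symm hCA) H3.hAp e hA hC)
  have hCq3 : C ∉ q3 := fun e => H3.qab (line_eq (Ne.symm hCB) H3.hBq e hB hC)
  obtain ⟨l4, hCl4, hl4ab, hav4⟩ := avoid_line_through h8 hC
    [Pp3, mkPoint hrBp3, mkPoint hmBq3, PpB, QB, RB] (by simp)
    (by intro y hy; simp only [List.mem_cons, List.not_mem_nil, or_false] at hy
        rcases hy with rfl | rfl | rfl | rfl | rfl | rfl
        · exact H3.PC
        · exact fun e => hCp3 (e ▸ (mkPoint_ax hrBp3).2)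
        · exact fun e => hCq3 (e ▸ (mkPoint_ax hmBq3).2)
        · exact HB.PC
        · exact HB.QC
        · exact HB.RC)
  have hAl4 : A ∉ l4 := fun e => hl4ab (line_eq (Ne.symm hCA) e hCl4 hA hC)
  have hBl4 : B ∉ l4 := fun e => hl4ab (line_eq (Ne.symm hCB) e hCl4 hB hC)
  obtain ⟨p4, q4, n4, Pp4, Q4, S4, D4, H4⟩ := construct hA hB hC hAB hCA hCB hCl4 hl4ab
    HB.hRab (hav4 RB (by simp)) HB.hBr HB.hRr HB.hAm HB.hRm
  have hrBl3 : rB ≠ l3 := fun e => hBl3 (e ▸ HB.hBr)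
  have hmBl3 : mB ≠ l3 := fun e => hAl3 (e ▸ HB.hAm)
  have eq4 : D3 = D4 := by
    refine genStep hdes H3 H4 ?_ ?_ (hav4 Pp3 (by simp)) ?_ ?_ ?_ ?_
    · exact fun e => H4.hRl ((pt_eq hrBl3 H4.hPr e HB.hRr hRBl3) ▸ H4.hPl)
    · exact fun e => H4.hRl ((pt_eq hmBl3 H4.hQm e HB.hRm hRBl3) ▸ H4.hQl)
    · exact fun e => hav4 (mkPoint hrBp3) (by simp)
        ((pt_eq hrBp3 H4.hPr e (mkPoint_ax hrBp3).1 (mkPoint_ax hrBp3).2) ▸ H4.hPl)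
    · exact fun e => hav4 (mkPoint hmBq3) (by simp)
        ((pt_eq hmBq3 H4.hQm e (mkPoint_ax hmBq3).1 (mkPoint_ax hmBq3).2) ▸ H4.hQl)
    · exact fun e => hBl4 ((pt_eq (show rB ≠ r2 from fun e' => hRmrB (e'.symm ▸ hRmr2))
        H4.hPr e HB.hBr hBr2) ▸ H4.hPl)
    · exact fun e => hAl4 ((pt_eq (show mB ≠ m2 from fun e' => hRmmB (e'.symm ▸ hRmm2))
        H4.hQm e HB.hAm hAm2) ▸ H4.hQl)
  have eq5 : D' = D4 := sameR hdes HB H4 (hav4 PpB (by simp)) (hav4 QB (by simp))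
  rw [eq1, eq2, eq3, eq4, eq5]

end HarmAux
namespace HarmAux
open Configuration Configuration.HasPoints Configuration.HasLines
variable {P L}
variable [Configuration.ProjectivePlane P L]

/-- The perspectivity with centre `O` from the range of `t` to the range of `s`. -/
def perspMap {t s : L} {O : P} (hOt : O ∉ t) (hOs : O ∉ s) :
    Rng P L t → Rng P L s := fun X =>
  ⟨mkPoint (show mkLine (show O ≠ (X : P) from fun e => hOt (e ▸ X.2)) ≠ s from
      fun e => hOs (e ▸ (mkLine_ax _).1)), (mkPoint_ax _).2⟩

lemma perspMap_spec {t s : L} {O : P} (hOt : O ∉ t) (hOs : O ∉ s) (X : Rng P L t) :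
    ∃ k : L, O ∈ k ∧ (X : P) ∈ k ∧ ((perspMap hOt hOs X : P)) ∈ k := by
  refine ⟨mkLine (show O ≠ (X : P) from fun e => hOt (e ▸ X.2)),
    (mkLine_ax _).1, (mkLine_ax _).2, ?_⟩
  exact (mkPoint_ax _).1

lemma perspMap_persp {t s : L} {O : P} (hOt : O ∉ t) (hOs : O ∉ s) :
    IsPerspectivity P L t s (perspMap hOt hOs) :=
  ⟨O, hOt, hOs, fun X => perspMap_spec hOt hOs X⟩

lemma perspMap_eq {t s : L} {O : P} (hOt : O ∉ t) (hOs : O ∉ s) (X : Rng P L t)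
    {Y : P} {k : L} (hOk : O ∈ k) (hXk : (X : P) ∈ k) (hYk : Y ∈ k) (hYs : Y ∈ s) :
    ((perspMap hOt hOs X : P)) = Y := by
  obtain ⟨k₀, hOk₀, hXk₀, hVk₀⟩ := perspMap_spec hOt hOs X
  have hOX : O ≠ (X : P) := fun e => hOt (e ▸ X.2)
  have hkk : k = k₀ := line_eq hOX hOk hXk hOk₀ hXk₀
  have hk₀s : k₀ ≠ s := fun e => hOs (e ▸ hOk₀)
  exact pt_eq hk₀s hVk₀ (perspMap hOt hOs X).2 (hkk ▸ hYk) hYs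

end HarmAux
/-- **Harmonic conjugacy is an involution.** Let `A ≠ B` and let `ab` be the
line `AB`.  If `u` is the map on the range of `ab` sending each point `X` to
its harmonic conjugate `h(A,B;X)`, then `u` is a projectivity of the range of
`ab` onto itself, `u ∘ u` is the identity, and `u` is not the identity. -/
theorem harmonic_involution
    [Configuration.ProjectivePlane P L]
    (hdes : DesarguesProperty P L) (hfano : FanoAxiom P L)
    (h8 : LinesHaveAtLeast P L 8)
    (A B : P) (hAB : A ≠ B) (ab : L) (hA : A ∈ ab) (hB : B ∈ ab)
    (u : Rng P L ab → Rng P L ab)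
    (hu : ∀ X : Rng P L ab, IsHarmonic P L A B (X : P) ((u X : P))) :
    IsProjectivity P L ab ab u ∧ u ∘ u = id ∧ u ≠ id := by
  classical
  open HarmAux in
  obtain ⟨R, hRab⟩ := Configuration.Nondegenerate.exists_point (P := P) (L := L) ab
  have hRA : R ≠ A := fun e => hRab (e ▸ hA)
  have hRB : R ≠ B := fun e => hRab (e ▸ hB)
  set m := Configuration.HasLines.mkLine (L := L) (Ne.symm hRA) with hmdef
  have hAm : A ∈ m := (Configuration.HasLines.mkLine_ax (Ne.symm hRA)).1
  have hRm : R ∈ m := (Configuration.HasLines.mkLine_ax (Ne.symm hRA)).2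
  have hmab : m ≠ ab := fun e => hRab (e ▸ hRm)
  obtain ⟨Q, hQm, havQ⟩ := avoid_on_line h8 m [A, R] (by simp)
  have hQA : Q ≠ A := havQ A (by simp)
  have hQR : Q ≠ R := havQ R (by simp)
  have hQab : Q ∉ ab := fun e => hQA (pt_eq hmab hQm e hAm hA)
  have hQB : Q ≠ B := fun e => hQab (e ▸ hB)
  set r := Configuration.HasLines.mkLine (L := L) (Ne.symm hRB) with hrdef
  have hBr : B ∈ r := (Configuration.HasLines.mkLine_ax (Ne.symm hRB)).1
  have hRr : R ∈ r := (Configuration.HasLines.mkLine_ax (Ne.symm hRB)).2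
  set q := Configuration.HasLines.mkLine (L := L) (Ne.symm hQB) with hqdef
  have hBq : B ∈ q := (Configuration.HasLines.mkLine_ax (Ne.symm hQB)).1
  have hQq : Q ∈ q := (Configuration.HasLines.mkLine_ax (Ne.symm hQB)).2
  have hrab : r ≠ ab := fun e => hRab (e ▸ hRr)
  have hqab : q ≠ ab := fun e => hQab (e ▸ hQq)
  have hAr : A ∉ r := fun e => hRab ((line_eq hAB e hBr hA hB) ▸ hRr)
  have hrm : r ≠ m := fun e => hAr (e ▸ hAm)
  have hQr : Q ∉ r := fun e => hQR (pt_eq hrm e hQm hRr hRm)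
  have hAq : A ∉ q := fun e => hQab ((line_eq hAB e hBq hA hB) ▸ hQq)
  have hRq : R ∉ q := fun e => hQr ((line_eq (Ne.symm hRB) hBq e hBr hRr) ▸ hQq)
  set f1 := perspMap (t := ab) (s := r) hQab hQr with hf1
  set f2 := perspMap (t := r) (s := q) hAr hAq with hf2
  set f3 := perspMap (t := q) (s := ab) hRq hRab with hf3
  have hueq : u = f3 ∘ (f2 ∘ f1) := by
    funext X
    apply Subtype.ext
    show ((u X : P)) = ((f3 (f2 (f1 X)) : P))
    by_cases hxA : (X : P) = A
    · have e0 : ((u X : P)) = A := harm_self_A (hxA ▸ hu X)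
      have e1 : ((f1 X : P)) = R :=
        perspMap_eq hQab hQr X hQm (by rw [hxA]; exact hAm) hRm hRr
      have e2 : ((f2 (f1 X) : P)) = Q :=
        perspMap_eq hAr hAq (f1 X) hAm (by rw [e1]; exact hRm) hQm hQq
      have e3 : ((f3 (f2 (f1 X)) : P)) = A :=
        perspMap_eq hRq hRab (f2 (f1 X)) hRm (by rw [e2]; exact hQm) hAm hA
      rw [e0, e3]
    by_cases hxB : (X : P) = B
    · have e0 : ((u X : P)) = B := harm_self_B (hxB ▸ hu X)
      have e1 : ((f1 X : P)) = B :=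
        perspMap_eq hQab hQr X hQq (by rw [hxB]; exact hBq) hBq hBr
      have e2 : ((f2 (f1 X) : P)) = B :=
        perspMap_eq hAr hAq (f1 X) hA (by rw [e1]; exact hB) hB hBq
      have e3 : ((f3 (f2 (f1 X)) : P)) = B :=
        perspMap_eq hRq hRab (f2 (f1 X)) hRr (by rw [e2]; exact hBr) hBr hB
      rw [e0, e3]
    · obtain ⟨k₁, hQk₁, hXk₁, hP₁k₁⟩ := perspMap_spec hQab hQr X
      obtain ⟨k₂, hAk₂, hP₁k₂, hS₁k₂⟩ := perspMap_spec hAr hAq (f1 X)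
      obtain ⟨k₃, hRk₃, hS₁k₃, hD₁k₃⟩ := perspMap_spec hRq hRab (f2 (f1 X))
      have hRk₁ : R ∉ k₁ := by
        intro e
        have hk₁m : k₁ = m := line_eq hQR hQk₁ e hQm hRm
        exact hxA (pt_eq hmab (hk₁m ▸ hXk₁) X.2 hAm hA)
      have hharm : IsHarmonic P L A B (X : P) ((f3 (f2 (f1 X)) : P)) :=
        ⟨hAB, ab, k₁, R, (f1 X : P), Q, (f2 (f1 X) : P), hA, hB, X.2, hXk₁,
          (fun e => hQab (e ▸ hQk₁)), hRab, hRk₁, hP₁k₁, ⟨r, hBr, hRr, (f1 X).2⟩,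
          hQk₁, ⟨m, hAm, hRm, hQm⟩, ⟨k₂, hAk₂, hP₁k₂, hS₁k₂⟩,
          ⟨q, hBq, hQq, (f2 (f1 X)).2⟩, (f3 (f2 (f1 X))).2, ⟨k₃, hRk₃, hS₁k₃, hD₁k₃⟩⟩
      exact harm_unique hdes h8 (hu X) hharm
  refine ⟨?_, ?_, ?_⟩
  · rw [hueq]
    exact IsProjectivity.comp
      (IsProjectivity.comp (IsProjectivity.persp (perspMap_persp hQab hQr))
        (IsProjectivity.persp (perspMap_persp hAr hAq)))
      (IsProjectivity.persp (perspMap_persp hRq hRab))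
  · funext X
    apply Subtype.ext
    show ((u (u X) : P)) = (X : P)
    by_cases hxA : (X : P) = A
    · have e0 : ((u X : P)) = A := harm_self_A (hxA ▸ hu X)
      have e1 : u X = X := Subtype.ext (by rw [e0, hxA])
      rw [e1, e0, hxA]
    by_cases hxB : (X : P) = B
    · have e0 : ((u X : P)) = B := harm_self_B (hxB ▸ hu X)
      have e1 : u X = X := Subtype.ext (by rw [e0, hxB])
      rw [e1, e0, hxB]
    · obtain ⟨l', r', m', p', q', n', R', Pp', Q', S', HX⟩ :=
        hcfg_of_isHarmonic hA hB hxA hxB (hu X)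
      exact harm_unique hdes h8 (hu (u X)) (isHarmonic_of_hcfg HX.symm)
  · intro e
    obtain ⟨Cf, hCfab, havC⟩ := avoid_on_line h8 ab [A, B] (by simp)
    have hCfA : Cf ≠ A := havC A (by simp)
    have hCfB : Cf ≠ B := havC B (by simp)
    have hux : ((u ⟨Cf, hCfab⟩ : P)) = Cf := by rw [e]; rfl
    obtain ⟨l', r', m', p', q', n', R', Pp', Q', S', HX⟩ :=
      hcfg_of_isHarmonic hA hB hCfA hCfB (hux ▸ hu ⟨Cf, hCfab⟩)
    exact HX.DC hfano rfl
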